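/- Let A be a graph and let H be obtained from the connected bipartite graph A by adding a ≥ 1 apex vertices (each new vertex adjacent to all vertices of A and to no other new vertex). If for every graphon W one has t_{A^{+a}}(W) ≥ t_{A^{+1}}(W)^a / t_A(W)^{a-1} and t_{A^{+a}}(1-W) ≥ t_{A^{+1}}(1-W)^a / t_A(1-W)^{a-1}, and moreover m_{A^{+1}}(W) ≥ 2^{-v(A)}·m_A(W) and m_A(W) ≥ 2^{1-e(A)}, then m_{A^{+a}}(W) ≥ 2^{1-e(A)-a·v(A)} = 2^{1-e(A^{+a})}; that is, A^{+a} is common. -/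

import Mathlib

open MeasureTheory

/-- Homomorphism density of a finite simple graph `G` in a kernel
`W : [0,1]² → ℝ` (symmetrised, which agrees with the usual definition for
symmetric `W`). -/
noncomputable def homDensity {V : Type*} [Fintype V] [DecidableEq V]
    (G : SimpleGraph V) (W : unitInterval → unitInterval → ℝ) : ℝ :=
  letI := Classical.decRel G.Adj
  ∫ x : V → unitInterval, ∏ e ∈ G.edgeFinset,
    Sym2.lift ⟨fun a b => (W (x a) (x b) + W (x b) (x a)) / 2, fun a b => by ring⟩ e

/-- `W` is a graphon: measurable, symmetric, with values in `[0,1]`. -/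
def IsGraphon (W : unitInterval → unitInterval → ℝ) : Prop :=
  Measurable (fun p : unitInterval × unitInterval => W p.1 p.2) ∧
    (∀ x y, W x y = W y x) ∧ (∀ x y, 0 ≤ W x y) ∧ (∀ x y, W x y ≤ 1)

/-- The complementary graphon `1 - W`. -/
def compl' (W : unitInterval → unitInterval → ℝ) : unitInterval → unitInterval → ℝ :=
  fun x y => 1 - W x y

/-- The graph `A^{+a}` obtained from `A` by adding `a` apex vertices, each joined to
every vertex of `A` and to no other new vertex. -/
def addApex {V : Type*} (A : SimpleGraph V) (a : ℕ) : SimpleGraph (V ⊕ Fin a) where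
  Adj x y :=
    match x, y with
    | Sum.inl u, Sum.inl v => A.Adj u v
    | Sum.inl _, Sum.inr _ => True
    | Sum.inr _, Sum.inl _ => True
    | Sum.inr _, Sum.inr _ => False
  symm := ⟨by
    rintro (u | i) (v | j) h
    · exact A.adj_symm h
    · trivial
    · trivial
    · exact h⟩
  loopless := ⟨by
    rintro (u | i) h
    · exact A.irrefl h
    · exact h⟩

namespace ApexAux

noncomputable def edgeFun (W : unitInterval → unitInterval → ℝ) {V : Type*}
    (x : V → unitInterval) : Sym2 V → ℝ :=
  Sym2.lift ⟨fun a b => (W (x a) (x b) + W (x b) (x a)) / 2, fun a b => by ring⟩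

lemma homDensity_eq {V : Type*} [Fintype V] [DecidableEq V] (G : SimpleGraph V)
    (W : unitInterval → unitInterval → ℝ) :
    homDensity G W = ∫ x : V → unitInterval,
      ∏ e ∈ (letI := Classical.decRel G.Adj; G.edgeFinset), edgeFun W x e := rfl

variable {W : unitInterval → unitInterval → ℝ}

lemma isGraphon_compl (hW : IsGraphon W) : IsGraphon (_root_.compl' W) := by
  obtain ⟨hm, hs, h0, h1⟩ := hW
  refine ⟨measurable_const.sub hm, fun x y => by rw [_root_.compl', _root_.compl', hs],
    fun x y => by simpa [_root_.compl'] using h1 x y,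
    fun x y => by simpa [_root_.compl'] using h0 x y⟩

lemma edgeFun_nonneg (hW : IsGraphon W) {V : Type*} (x : V → unitInterval) (e : Sym2 V) :
    0 ≤ edgeFun W x e := by
  induction e using Sym2.ind with
  | _ a b =>
    simp only [edgeFun, Sym2.lift_mk]
    have := hW.2.2.1 (x a) (x b)
    have := hW.2.2.1 (x b) (x a)
    linarith

lemma edgeFun_le_one (hW : IsGraphon W) {V : Type*} (x : V → unitInterval) (e : Sym2 V) :
    edgeFun W x e ≤ 1 := by
  induction e using Sym2.ind with
  | _ a b =>
    simp only [edgeFun, Sym2.lift_mk]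
    have := hW.2.2.2 (x a) (x b)
    have := hW.2.2.2 (x b) (x a)
    linarith

lemma measurable_edgeFun (hW : IsGraphon W) {V : Type*}
    (e : Sym2 V) : Measurable (fun x : V → unitInterval => edgeFun W x e) := by
  induction e using Sym2.ind with
  | _ a b =>
    simp only [edgeFun, Sym2.lift_mk]
    have h1 : Measurable (fun x : V → unitInterval => W (x a) (x b)) := by
      have := hW.1.comp ((measurable_pi_apply a).prodMk (measurable_pi_apply b) :
        Measurable fun x : V → unitInterval => (x a, x b))
      exact this
    have h2 : Measurable (fun x : V → unitInterval => W (x b) (x a)) := by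
      have := hW.1.comp ((measurable_pi_apply b).prodMk (measurable_pi_apply a) :
        Measurable fun x : V → unitInterval => (x b, x a))
      exact this
    exact (h1.add h2).div_const 2

lemma prod_edgeFun_nonneg (hW : IsGraphon W) {V : Type*} (x : V → unitInterval)
    (s : Finset (Sym2 V)) : 0 ≤ ∏ e ∈ s, edgeFun W x e :=
  Finset.prod_nonneg fun e _ => edgeFun_nonneg hW x e

lemma prod_edgeFun_le_one (hW : IsGraphon W) {V : Type*} (x : V → unitInterval)
    (s : Finset (Sym2 V)) : ∏ e ∈ s, edgeFun W x e ≤ 1 :=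
  Finset.prod_le_one (fun e _ => edgeFun_nonneg hW x e) (fun e _ => edgeFun_le_one hW x e)

lemma integrable_prod_edgeFun (hW : IsGraphon W) {V : Type*} [Fintype V]
    (s : Finset (Sym2 V)) :
    Integrable (fun x : V → unitInterval => ∏ e ∈ s, edgeFun W x e) := by
  refine (integrable_const (1 : ℝ)).mono'
    (Finset.measurable_prod s fun e _ => measurable_edgeFun hW e).aestronglyMeasurable
    (Filter.Eventually.of_forall fun x => ?_)
  rw [Real.norm_eq_abs, abs_of_nonneg (prod_edgeFun_nonneg hW x s)]
  exact prod_edgeFun_le_one hW x s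

lemma homDensity_nonneg {V : Type*} [Fintype V] [DecidableEq V] (G : SimpleGraph V)
    (hW : IsGraphon W) : 0 ≤ homDensity G W := by
  rw [homDensity_eq]
  exact integral_nonneg fun x => prod_edgeFun_nonneg hW x _

lemma homDensity_addApex_one_le {V : Type*} [Fintype V] [DecidableEq V] (A : SimpleGraph V)
    (hW : IsGraphon W) : homDensity (addApex A 1) W ≤ homDensity A W := by
  classical
  rw [homDensity_eq, homDensity_eq]
  set T : ((V ⊕ Fin 1) → unitInterval) → (V → unitInterval) := fun x => x ∘ Sum.inl with hT
  have hTmp : MeasurePreserving T volume volume := by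
    have h1 := volume_measurePreserving_sumPiEquivProdPi (fun _ : V ⊕ Fin 1 => unitInterval)
    have h2 : MeasurePreserving
        (Prod.fst : (V → unitInterval) × (Fin 1 → unitInterval) → (V → unitInterval))
        volume volume := by
      refine ⟨measurable_fst, ?_⟩
      have : (volume : Measure ((V → unitInterval) × (Fin 1 → unitInterval)))
          = (volume : Measure (V → unitInterval)).prod volume := rfl
      rw [this, Measure.map_fst_prod]
      simp
    exact h2.comp h1
  set s : Finset (Sym2 (V ⊕ Fin 1)) :=
    A.edgeFinset.image (Sym2.map Sum.inl) with hs
  have hsub : s ⊆ (addApex A 1).edgeFinset := by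
    intro e he
    rw [hs, Finset.mem_image] at he
    obtain ⟨e', he', rfl⟩ := he
    induction e' using Sym2.ind with
    | _ u v =>
      rw [SimpleGraph.mem_edgeFinset, Sym2.map_pair_eq, SimpleGraph.mem_edgeSet]
      rw [SimpleGraph.mem_edgeFinset, SimpleGraph.mem_edgeSet] at he'
      exact he'
  have hpoint : ∀ x : (V ⊕ Fin 1) → unitInterval,
      ∏ e ∈ (addApex A 1).edgeFinset, edgeFun W x e ≤
        ∏ e ∈ A.edgeFinset, edgeFun W (T x) e := by
    intro x
    have h1 : ∏ e ∈ (addApex A 1).edgeFinset, edgeFun W x e ≤ ∏ e ∈ s, edgeFun W x e := by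
      rw [← Finset.prod_sdiff hsub]
      exact mul_le_of_le_one_left (prod_edgeFun_nonneg hW x s) (prod_edgeFun_le_one hW x _)
    have h2 : ∏ e ∈ s, edgeFun W x e = ∏ e ∈ A.edgeFinset, edgeFun W (T x) e := by
      rw [hs, Finset.prod_image]
      · refine Finset.prod_congr rfl fun e _ => ?_
        induction e using Sym2.ind with
        | _ u v => rfl
      · intro e1 _ e2 _ h
        exact Sym2.map.injective Sum.inl_injective h
    rw [← h2]; exact h1
  have hgmeas : Measurable (fun y : V → unitInterval => ∏ e ∈ A.edgeFinset, edgeFun W y e) :=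
    Finset.measurable_prod _ fun e _ => measurable_edgeFun hW e
  have hcomp : (fun x : (V ⊕ Fin 1) → unitInterval =>
      ∏ e ∈ A.edgeFinset, edgeFun W (T x) e) =
      fun x => ∏ e ∈ s, edgeFun W x e := by
    funext x
    rw [hs, Finset.prod_image]
    · refine (Finset.prod_congr rfl fun e _ => ?_).symm
      induction e using Sym2.ind with
      | _ u v => rfl
    · intro e1 _ e2 _ h
      exact Sym2.map.injective Sum.inl_injective h
  have hint : ∫ x : (V ⊕ Fin 1) → unitInterval, ∏ e ∈ A.edgeFinset, edgeFun W (T x) e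
      = ∫ y : V → unitInterval, ∏ e ∈ A.edgeFinset, edgeFun W y e := by
    have := integral_map (μ := (volume : Measure ((V ⊕ Fin 1) → unitInterval)))
      hTmp.measurable.aemeasurable
      (f := fun y : V → unitInterval => ∏ e ∈ A.edgeFinset, edgeFun W y e)
      (by rw [hTmp.map_eq]; exact hgmeas.aestronglyMeasurable)
    rw [hTmp.map_eq] at this
    exact this.symm
  calc ∫ x : (V ⊕ Fin 1) → unitInterval, ∏ e ∈ (addApex A 1).edgeFinset, edgeFun W x e
      ≤ ∫ x : (V ⊕ Fin 1) → unitInterval, ∏ e ∈ A.edgeFinset, edgeFun W (T x) e := by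
        refine integral_mono (integrable_prod_edgeFun hW _) ?_ hpoint
        rw [hcomp]; exact integrable_prod_edgeFun hW _
    _ = ∫ y : V → unitInterval, ∏ e ∈ A.edgeFinset, edgeFun W y e := hint

/-- key identity: for `z > 0`, `x^a / z^(a-1) = z * (x/z)^a`. -/
lemma pow_div_eq {x z : ℝ} (hz : 0 < z) (a : ℕ) (ha : 1 ≤ a) :
    x ^ a / z ^ (a - 1) = z * (x / z) ^ a := by
  have : z ^ a = z ^ (a - 1) * z := by
    have h : a = (a - 1) + 1 := by omega
    conv_lhs => rw [h]
    rw [pow_succ]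
  rw [div_pow, this]
  field_simp

/-- two-term Radon inequality. -/
lemma radon2 {x y z w : ℝ} (hx : 0 ≤ x) (hy : 0 ≤ y) (hz : 0 < z) (hw : 0 < w)
    (a : ℕ) (ha : 1 ≤ a) :
    (x + y) ^ a / (z + w) ^ (a - 1) ≤ x ^ a / z ^ (a - 1) + y ^ a / w ^ (a - 1) := by
  have hzw : 0 < z + w := by linarith
  rw [pow_div_eq hzw a ha, pow_div_eq hz a ha, pow_div_eq hw a ha]
  have hconv := (convexOn_pow a).2 (Set.mem_Ici.2 (div_nonneg hx hz.le))
    (Set.mem_Ici.2 (div_nonneg hy hw.le))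
    (div_nonneg hz.le hzw.le) (div_nonneg hw.le hzw.le)
    (by field_simp)
  have heq : (z / (z + w)) • (x / z) + (w / (z + w)) • (y / w) = (x + y) / (z + w) := by
    have := hz.ne'; have := hw.ne'; have := hzw.ne'
    simp only [smul_eq_mul]
    field_simp
  rw [heq] at hconv
  have := mul_le_mul_of_nonneg_left hconv hzw.le
  calc (z + w) * ((x + y) / (z + w)) ^ a
      ≤ (z + w) * (z / (z + w) * (x / z) ^ a + w / (z + w) * (y / w) ^ a) := this
    _ = z * (x / z) ^ a + w * (y / w) ^ a := by field_simp

end ApexAux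

/-- If `A` is a connected bipartite graph, `a ≥ 1`, and for a graphon `W` the stated
density inequalities hold, then `m_{A^{+a}}(W) ≥ 2^{1-e(A)-a·v(A)} = 2^{1-e(A^{+a})}`;
that is, `A^{+a}` is common. -/
theorem addApex_common {V : Type*} [Fintype V] [DecidableEq V]
    (A : SimpleGraph V) [DecidableRel A.Adj]
    (hconn : A.Connected) (hbip : A.Colorable 2)
    (a : ℕ) (ha : 1 ≤ a)
    (W : unitInterval → unitInterval → ℝ) (hW : IsGraphon W)
    (ht1 : homDensity (addApex A 1) W ^ a / homDensity A W ^ (a - 1) ≤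
      homDensity (addApex A a) W)
    (ht2 : homDensity (addApex A 1) (compl' W) ^ a / homDensity A (compl' W) ^ (a - 1) ≤
      homDensity (addApex A a) (compl' W))
    (hm1 : (2 : ℝ) ^ (-(Fintype.card V : ℤ)) *
        (homDensity A W + homDensity A (compl' W)) ≤
      homDensity (addApex A 1) W + homDensity (addApex A 1) (compl' W))
    (hmA : (2 : ℝ) ^ (1 - (A.edgeFinset.card : ℤ)) ≤
      homDensity A W + homDensity A (compl' W)) :
    (2 : ℝ) ^ (1 - (A.edgeFinset.card : ℤ) - a * (Fintype.card V : ℤ)) ≤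
      homDensity (addApex A a) W + homDensity (addApex A a) (compl' W) := by
  have hW' : IsGraphon (compl' W) := ApexAux.isGraphon_compl hW
  set n : ℤ := (Fintype.card V : ℤ)
  set c : ℝ := (2 : ℝ) ^ (-n) with hc
  have hcpos : 0 < c := zpow_pos (by norm_num) _
  set x := homDensity (addApex A 1) W
  set y := homDensity (addApex A 1) (compl' W)
  set z := homDensity A W
  set w := homDensity A (compl' W)
  have hx0 : 0 ≤ x := ApexAux.homDensity_nonneg _ hW
  have hy0 : 0 ≤ y := ApexAux.homDensity_nonneg _ hW'
  have hz0 : 0 ≤ z := ApexAux.homDensity_nonneg _ hW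
  have hw0 : 0 ≤ w := ApexAux.homDensity_nonneg _ hW'
  have hxz : x ≤ z := ApexAux.homDensity_addApex_one_le A hW
  have hyw : y ≤ w := ApexAux.homDensity_addApex_one_le A hW'
  have hzwpos : 0 < z + w :=
    lt_of_lt_of_le (zpow_pos (by norm_num : (0:ℝ) < 2) _) hmA
  have key : c ^ a * (z + w) ≤ x ^ a / z ^ (a - 1) + y ^ a / w ^ (a - 1) := by
    rcases eq_or_lt_of_le hz0 with hz | hz
    · -- z = 0, so x = 0, w > 0
      have hz' : z = 0 := hz.symm
      have hx : x = 0 := le_antisymm (hxz.trans hz'.le) hx0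
      have hwpos : 0 < w := by rw [hz'] at hzwpos; linarith
      have hyc : c * w ≤ y := by
        have h := hm1
        rw [hz', hx] at h
        simpa using h
      have h1 : x ^ a / z ^ (a - 1) = 0 := by
        rw [hx, zero_pow (by omega), zero_div]
      rw [h1, zero_add, ApexAux.pow_div_eq hwpos a ha, hz', zero_add]
      have : c ≤ y / w := (le_div_iff₀ hwpos).2 (by linarith [hyc])
      calc c ^ a * w = w * c ^ a := by ring
        _ ≤ w * (y / w) ^ a := by
            exact mul_le_mul_of_nonneg_left (pow_le_pow_left₀ hcpos.le this a) hwpos.le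
    rcases eq_or_lt_of_le hw0 with hw | hw
    · -- w = 0, so y = 0, z > 0
      have hw' : w = 0 := hw.symm
      have hy : y = 0 := le_antisymm (hyw.trans hw'.le) hy0
      have hzpos : 0 < z := hz
      have hxc : c * z ≤ x := by
        have h := hm1
        rw [hw', hy] at h
        simpa using h
      have h2 : y ^ a / w ^ (a - 1) = 0 := by
        rw [hy, zero_pow (by omega), zero_div]
      rw [h2, add_zero, ApexAux.pow_div_eq hzpos a ha, hw', add_zero]
      have : c ≤ x / z := (le_div_iff₀ hzpos).2 (by linarith [hxc])
      calc c ^ a * z = z * c ^ a := by ring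
        _ ≤ z * (x / z) ^ a := by
            exact mul_le_mul_of_nonneg_left (pow_le_pow_left₀ hcpos.le this a) hzpos.le
    · -- main case
      have hrad := ApexAux.radon2 hx0 hy0 hz hw a ha
      have hle : c * (z + w) ≤ x + y := hm1
      have hmono : (c * (z + w)) ^ a ≤ (x + y) ^ a :=
        pow_le_pow_left₀ (mul_nonneg hcpos.le hzwpos.le) hle a
      have h1 : (c * (z + w)) ^ a / (z + w) ^ (a - 1) = c ^ a * (z + w) := by
        rw [ApexAux.pow_div_eq hzwpos a ha, mul_div_assoc, div_self hzwpos.ne', mul_one]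
        ring
      calc c ^ a * (z + w) = (c * (z + w)) ^ a / (z + w) ^ (a - 1) := h1.symm
        _ ≤ (x + y) ^ a / (z + w) ^ (a - 1) := by
            gcongr
        _ ≤ x ^ a / z ^ (a - 1) + y ^ a / w ^ (a - 1) := hrad
  have hexp : (2 : ℝ) ^ (1 - (A.edgeFinset.card : ℤ) - a * n) =
      (2 : ℝ) ^ (1 - (A.edgeFinset.card : ℤ)) * c ^ a := by
    rw [hc, ← zpow_natCast ((2 : ℝ) ^ (-n)) a, ← zpow_mul,
      ← zpow_add₀ (two_ne_zero : (2:ℝ) ≠ 0)]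
    congr 1
    ring
  calc (2 : ℝ) ^ (1 - (A.edgeFinset.card : ℤ) - a * n)
      = (2 : ℝ) ^ (1 - (A.edgeFinset.card : ℤ)) * c ^ a := hexp
    _ ≤ (z + w) * c ^ a :=
        mul_le_mul_of_nonneg_right hmA (pow_nonneg hcpos.le a)
    _ = c ^ a * (z + w) := by ring
    _ ≤ x ^ a / z ^ (a - 1) + y ^ a / w ^ (a - 1) := key
    _ ≤ homDensity (addApex A a) W + homDensity (addApex A a) (compl' W) :=
        add_le_add ht1 ht2
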